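/- arXiv:2506.17254 — 6 statements merged into one kernel-verified Lean document; each statement's English description precedes it below -/
import Mathlib

section
/- Let ι be a finite type with exactly M elements, let γ > 0 be a real number, and let a, n : ι → ℝ satisfy a i ≥ 0 and n i > 0 for every i. Then ∑_{i ∈ ι} f_rad(a i, n i) · n i ≤ √(γ · M · ∑_{i ∈ ι} a i · n i) + γ · M. -/
open Real Finset

/-- Confidence radius `f_rad(v, n) = √(γ·v/n) + γ/n`. -/
noncomputable def frad (γ v n : ℝ) : ℝ := Real.sqrt (γ * v / n) + γ / n

theorem stmt_0 {ι : Type*} [Fintype ι] (M : ℕ) (hM : Fintype.card ι = M)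
    (γ : ℝ) (hγ : 0 < γ) (a n : ι → ℝ)
    (ha : ∀ i, 0 ≤ a i) (hn : ∀ i, 0 < n i) :
    ∑ i, frad γ (a i) (n i) * n i
      ≤ Real.sqrt (γ * M * ∑ i, a i * n i) + γ * M := by
  have key : ∀ i, frad γ (a i) (n i) * n i = Real.sqrt (γ * (a i * n i)) + γ := by
    intro i
    have hni := hn i
    have hai := ha i
    unfold frad
    rw [add_mul, div_mul_cancel₀ _ hni.ne']
    congr 1
    rw [← Real.sqrt_sq hni.le, ← Real.sqrt_mul (by positivity)]
    congr 1
    field_simp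
    rw [Real.sq_sqrt (by positivity)]
  rw [Finset.sum_congr rfl (fun i _ => key i), Finset.sum_add_distrib,
    Finset.sum_const, Finset.card_univ, hM, nsmul_eq_mul, mul_comm (M : ℝ) γ]
  refine add_le_add ?_ le_rfl
  have h1 : (∑ i, Real.sqrt (γ * (a i * n i))) ^ 2
      ≤ (M : ℝ) * ∑ i, γ * (a i * n i) := by
    have h2 := sq_sum_le_card_mul_sum_sq (s := Finset.univ)
      (f := fun i => Real.sqrt (γ * (a i * n i)))
    simp only [Finset.card_univ, hM] at h2
    calc (∑ i, Real.sqrt (γ * (a i * n i))) ^ 2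
        ≤ (M : ℝ) * ∑ i, Real.sqrt (γ * (a i * n i)) ^ 2 := h2
      _ = (M : ℝ) * ∑ i, γ * (a i * n i) := by
          congr 1
          exact Finset.sum_congr rfl fun i _ =>
            Real.sq_sqrt (by have := ha i; have := (hn i).le; positivity)
  calc ∑ i, Real.sqrt (γ * (a i * n i))
      = Real.sqrt ((∑ i, Real.sqrt (γ * (a i * n i))) ^ 2) :=
        (Real.sqrt_sq (Finset.sum_nonneg fun i _ => Real.sqrt_nonneg _)).symm
    _ ≤ Real.sqrt (γ * M * ∑ i, a i * n i) := by
        apply Real.sqrt_le_sqrt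
        calc _ ≤ (M : ℝ) * ∑ i, γ * (a i * n i) := h1
          _ = γ * M * ∑ i, a i * n i := by
              rw [← Finset.mul_sum]; ring
end

section
/- Let (Ω, P) be a probability space, n ≥ 1 a natural number, γ > 0, and let X₁, …, Xₙ : Ω → ℝ be independent, identically distributed random variables taking values in [0,1] almost surely, with common mean v. Let x̄ = (1/n) ∑_{i=1}^n X_i denote the empirical average. Then P( |x̄ − v| ≥ √(γ · v / n) + γ / n ) ≤ 2 · exp(−3γ/8). -/
open MeasureTheory ProbabilityTheory Real

private lemma exp_poly_upper {s : ℝ} (h0 : 0 ≤ s) (h1 : s ≤ 1) :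
    Real.exp s ≤ 1 + s + s^2/2 + s^3/6 + 5*s^4/96 := by
  have h := Real.exp_bound' h0 h1 (n := 4) (by norm_num)
  rw [Finset.sum_range_succ, Finset.sum_range_succ, Finset.sum_range_succ,
    Finset.sum_range_succ, Finset.sum_range_zero] at h
  norm_num [Nat.factorial] at h
  nlinarith [h]

private lemma exp_neg_poly_upper {s : ℝ} (h0 : 0 ≤ s) (h1 : s ≤ 1) :
    Real.exp (-s) ≤ 1 - s + s^2/2 + 2*s^3/9 := by
  have habs : |(-s)| ≤ 1 := by rw [abs_neg, abs_of_nonneg h0]; exact h1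
  have h := Real.exp_bound habs (n := 3) (by norm_num)
  rw [Finset.sum_range_succ, Finset.sum_range_succ, Finset.sum_range_succ,
    Finset.sum_range_zero] at h
  rw [abs_neg, abs_of_nonneg h0] at h
  norm_num [Nat.factorial] at h
  have := (abs_sub_le_iff.1 h).1
  nlinarith [this]

private lemma caseA (μ γ r a b s : ℝ) (hγ : 0 < γ) (hr0 : 0 ≤ r)
    (hr2 : r^2 = γ*μ) (ha : a = r + γ) (hb : b = μ + a/3) (hμ0 : 0 < μ)
    (hb0 : 0 < b) (hsb : s * b = a) (hs0 : 0 ≤ s) (hs1 : s ≤ 1) :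
    μ * (Real.exp s - 1) - s * (μ + a) ≤ -(3*γ)/8 := by
  have hexp := exp_poly_upper hs0 hs1
  have hμb : μ = b * (1 - s/3) := by nlinarith [hsb]
  have hpoly : (1 - s/3) * (s^2/2 + s^3/6 + 5*s^4/96) ≤ s^2/2 := by
    nlinarith [pow_nonneg hs0 4, pow_nonneg hs0 5]
  have step1 : μ * (Real.exp s - 1) - s * (μ + a) ≤ -(s*a)/2 := by
    have h1 : μ * (Real.exp s - 1) ≤ μ * (s + s^2/2 + s^3/6 + 5*s^4/96) := by
      nlinarith [hexp, hμ0.le]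
    have h2 : μ * (s^2/2 + s^3/6 + 5*s^4/96) ≤ b * (s^2/2) := by
      rw [hμb]
      calc b * (1 - s/3) * (s^2/2 + s^3/6 + 5*s^4/96)
          = b * ((1 - s/3) * (s^2/2 + s^3/6 + 5*s^4/96)) := by ring
        _ ≤ b * (s^2/2) := mul_le_mul_of_nonneg_left hpoly hb0.le
    have h3 : b * (s^2/2) = s*a/2 := by nlinarith [hsb]
    nlinarith [h1, h2, h3]
  have step2 : 3*γ ≤ 4*(s*a) := by
    have h4 : 3*γ*b ≤ 4*a^2 := by nlinarith [hr2, hr0, hγ.le]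
    have h5 : s*a*b = a^2 := by nlinarith [hsb]
    nlinarith [h4, h5, hb0, mul_pos hb0 hb0]
  linarith [step1, step2]

private lemma caseB (μ γ r a : ℝ) (hμ : 0 ≤ μ) (hγ : 0 < γ) (hr0 : 0 ≤ r)
    (hr2 : r^2 = γ*μ) (ha : a = r + γ) (hcase : 3*μ/2 < a) :
    μ * (Real.exp 1 - 1) - 1 * (μ + a) ≤ -(3*γ)/8 := by
  have he₁ : Real.exp 1 < 2.7182818286 := Real.exp_one_lt_d9
  have he₂ : (2:ℝ) < Real.exp 1 := by
    have := Real.exp_one_gt_d9; linarith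
  have hga : γ ≤ a := by nlinarith [hr0]
  nlinarith [hga, he₁, he₂, hγ, hμ, hcase, mul_pos hγ hγ]

private lemma keyA (μ γ : ℝ) (hμ : 0 ≤ μ) (hγ : 0 < γ) :
    ∃ s : ℝ, 0 ≤ s ∧
      μ * (Real.exp s - 1) - s * (μ + (Real.sqrt (γ * μ) + γ)) ≤ -(3*γ)/8 := by
  have hr0 : 0 ≤ Real.sqrt (γ * μ) := Real.sqrt_nonneg _
  have hr2 : (Real.sqrt (γ * μ))^2 = γ * μ := Real.sq_sqrt (by positivity)
  generalize hrg : Real.sqrt (γ * μ) = r at *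
  set a := r + γ with ha
  have ha0 : 0 < a := by positivity
  by_cases hcase : a ≤ 3*μ/2
  · have hμ0 : 0 < μ := by nlinarith
    have hb0 : 0 < μ + a/3 := by positivity
    refine ⟨a/(μ + a/3), by positivity, ?_⟩
    refine caseA μ γ r a (μ + a/3) _ hγ hr0 hr2 ha rfl hμ0 hb0
      (div_mul_cancel₀ _ hb0.ne') (by positivity) ?_
    rw [div_le_one hb0]; linarith
  · exact ⟨1, zero_le_one, caseB μ γ r a hμ hγ hr0 hr2 ha (not_le.1 hcase)⟩

private lemma caseC (μ γ r a s : ℝ) (hγ : 0 < γ) (hr0 : 0 ≤ r)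
    (hr2 : r^2 = γ*μ) (ha : a = r + γ) (hcase : a ≤ μ) (hμ0 : 0 < μ)
    (hsμ : s * μ = 7*a/10) (hs0 : 0 ≤ s) (hs7 : s ≤ 7/10) :
    μ * (Real.exp (-s) - 1) + s * (μ - a) ≤ -(3*γ)/8 := by
  have ha0 : 0 < a := by rw [ha]; positivity
  have hs1 : s ≤ 1 := by linarith
  have hexp := exp_neg_poly_upper hs0 hs1
  have step1 : μ * (Real.exp (-s) - 1) + s * (μ - a) ≤ μ*s^2/2 + 2*μ*s^3/9 - s*a := by
    have h1 : μ * Real.exp (-s) ≤ μ * (1 - s + s^2/2 + 2*s^3/9) :=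
      mul_le_mul_of_nonneg_left hexp hμ0.le
    nlinarith [h1]
  have e1 : μ*s^2/2 = 7*a*s/20 := by linear_combination (s/2) * hsμ
  have e2 : 2*μ*s^3/9 = 7*a*s^2/45 := by linear_combination (2*s^2/9) * hsμ
  have hs2 : s^2 ≤ (7/10)*s := by nlinarith [hs0, hs7]
  have hsa : 7*γ/10 ≤ s*a := by
    have h6 : s*a*μ = 7*a^2/10 := by linear_combination a*hsμ
    have h7 : γ*μ ≤ a^2 := by nlinarith [hr2, hr0, hγ.le]
    nlinarith [h6, h7, hμ0]
  have step2 : μ*s^2/2 + 2*μ*s^3/9 - s*a ≤ -(3*γ)/8 := by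
    rw [e1, e2]
    nlinarith [hs2, hsa, ha0.le, hs0, mul_nonneg ha0.le hs0]
  linarith [step1, step2]

private lemma keyB (μ γ : ℝ) (hγ : 0 < γ)
    (hcase : Real.sqrt (γ * μ) + γ ≤ μ) :
    ∃ s : ℝ, 0 ≤ s ∧
      μ * (Real.exp (-s) - 1) + s * (μ - (Real.sqrt (γ * μ) + γ)) ≤ -(3*γ)/8 := by
  have hr0 : 0 ≤ Real.sqrt (γ * μ) := Real.sqrt_nonneg _
  have hμ0 : 0 < μ := lt_of_lt_of_le (by positivity) hcase
  have hr2 : (Real.sqrt (γ * μ))^2 = γ * μ := Real.sq_sqrt (by positivity)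
  generalize hrg : Real.sqrt (γ * μ) = r at *
  set a := r + γ with ha
  have ha0 : 0 < a := by positivity
  refine ⟨7*a/(10*μ), by positivity, ?_⟩
  refine caseC μ γ r a _ hγ hr0 hr2 ha hcase hμ0 ?_ (by positivity) ?_
  · field_simp
  · rw [div_le_div_iff₀ (by positivity) (by norm_num)]; nlinarith [hcase]

theorem stmt_1 {Ω : Type*} [MeasurableSpace Ω] (P : Measure Ω) [IsProbabilityMeasure P]
    (n : ℕ) (hn : 1 ≤ n) (γ : ℝ) (hγ : 0 < γ) (v : ℝ)
    (X : Fin n → Ω → ℝ)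
    (hmeas : ∀ i, Measurable (X i))
    (hindep : iIndepFun X P)
    (hident : ∀ i j, IdentDistrib (X i) (X j) P P)
    (hrange : ∀ i, ∀ᵐ ω ∂P, X i ω ∈ Set.Icc (0 : ℝ) 1)
    (hmean : ∀ i, ∫ ω, X i ω ∂P = v) :
    P {ω | Real.sqrt (γ * v / n) + γ / n ≤ |(1 / (n : ℝ)) * ∑ i, X i ω - v|}
      ≤ ENNReal.ofReal (2 * Real.exp (-(3 * γ) / 8)) := by
  have hn0 : (0:ℝ) < n := by exact_mod_cast hn
  have i0 : Fin n := ⟨0, hn⟩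
  -- basic integrability facts
  have hXint : ∀ i, Integrable (X i) P := by
    intro i
    refine (integrable_const (1:ℝ)).mono' (hmeas i).aestronglyMeasurable ?_
    filter_upwards [hrange i] with ω hω
    rw [Real.norm_eq_abs, abs_of_nonneg hω.1]; exact hω.2
  have hv0 : 0 ≤ v := by
    rw [← hmean i0]
    refine integral_nonneg_of_ae ?_
    filter_upwards [hrange i0] with ω hω using hω.1
  have hexpint : ∀ (t : ℝ) (i : Fin n), Integrable (fun ω => Real.exp (t * X i ω)) P := by
    intro t i
    refine (integrable_const (Real.exp |t|)).mono'
      (((hmeas i).const_mul t).exp).aestronglyMeasurable ?_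
    filter_upwards [hrange i] with ω hω
    rw [Real.norm_eq_abs, Real.abs_exp, Real.exp_le_exp]
    calc t * X i ω ≤ |t * X i ω| := le_abs_self _
      _ = |t| * |X i ω| := abs_mul _ _
      _ ≤ |t| * 1 := by
          gcongr
          rw [abs_of_nonneg hω.1]; exact hω.2
      _ = |t| := mul_one _
  -- mgf bound for each X i
  have hmgf_i : ∀ (t : ℝ) (i : Fin n), mgf (X i) P t ≤ Real.exp (v * (Real.exp t - 1)) := by
    intro t i
    have hpt : ∀ᵐ ω ∂P, Real.exp (t * X i ω) ≤ 1 + (Real.exp t - 1) * X i ω := by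
      filter_upwards [hrange i] with ω hω
      have hc := convexOn_exp.2 (Set.mem_univ (0:ℝ)) (Set.mem_univ t)
        (sub_nonneg.2 hω.2) hω.1 (by ring)
      simp only [smul_eq_mul, mul_zero, zero_add, Real.exp_zero, mul_one] at hc
      calc Real.exp (t * X i ω) = Real.exp (X i ω * t) := by rw [mul_comm]
        _ ≤ 1 - X i ω + X i ω * Real.exp t := hc
        _ = 1 + (Real.exp t - 1) * X i ω := by ring
    calc mgf (X i) P t = ∫ ω, Real.exp (t * X i ω) ∂P := rfl
      _ ≤ ∫ ω, (1 + (Real.exp t - 1) * X i ω) ∂P :=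
          integral_mono_ae (hexpint t i)
            ((integrable_const 1).add ((hXint i).const_mul _)) hpt
      _ = 1 + (Real.exp t - 1) * v := by
          rw [integral_add (integrable_const 1) ((hXint i).const_mul _),
            integral_const, integral_const_mul, hmean i]
          simp
      _ ≤ Real.exp (v * (Real.exp t - 1)) := by
          have := Real.add_one_le_exp (v * (Real.exp t - 1))
          nlinarith [this]
  -- mgf bound for the sum
  have hmgfS : ∀ t : ℝ, mgf (∑ i, X i) P t ≤ Real.exp (((n:ℝ)*v) * (Real.exp t - 1)) := by
    intro t
    rw [hindep.mgf_sum hmeas]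
    calc ∏ i, mgf (X i) P t
        ≤ ∏ _i : Fin n, Real.exp (v * (Real.exp t - 1)) :=
          Finset.prod_le_prod (fun i _ => mgf_nonneg) (fun i _ => hmgf_i t i)
      _ = Real.exp (v * (Real.exp t - 1)) ^ n := by
          rw [Finset.prod_const, Finset.card_univ, Fintype.card_fin]
      _ = Real.exp (((n:ℝ)*v) * (Real.exp t - 1)) := by
          rw [← Real.exp_nat_mul]; ring_nf
  have hSint : ∀ t : ℝ, Integrable (fun ω => Real.exp (t * (∑ i, X i) ω)) P := fun t =>
    hindep.integrable_exp_mul_sum hmeas (fun i _ => hexpint t i)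
  set a : ℝ := Real.sqrt (γ * ((n:ℝ)*v)) + γ with hadef
  have ha0 : 0 < a := by positivity
  -- n * radius = a
  have hnt : (n:ℝ) * (Real.sqrt (γ * v / n) + γ / n) = a := by
    have h1 : γ * v / (n:ℝ) = γ * ((n:ℝ)*v) / (n:ℝ)^2 := by field_simp
    rw [h1, Real.sqrt_div' _ (by positivity), Real.sqrt_sq hn0.le, hadef]
    field_simp
  -- inclusion into the two tails
  have hsub : {ω | Real.sqrt (γ * v / n) + γ / n ≤ |(1 / (n : ℝ)) * ∑ i, X i ω - v|}
      ⊆ {ω | (n:ℝ)*v + a ≤ (∑ i, X i) ω} ∪ {ω | (∑ i, X i) ω ≤ (n:ℝ)*v - a} := by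
    intro ω hω
    simp only [Set.mem_setOf_eq, Set.mem_union, Finset.sum_apply] at hω ⊢
    have h2 : a ≤ |∑ i, X i ω - (n:ℝ)*v| := by
      rw [← hnt]
      calc (n:ℝ) * (Real.sqrt (γ * v / n) + γ / n)
          ≤ (n:ℝ) * |(1 / (n : ℝ)) * ∑ i, X i ω - v| :=
            mul_le_mul_of_nonneg_left hω hn0.le
        _ = |(n:ℝ)| * |(1 / (n : ℝ)) * ∑ i, X i ω - v| := by rw [abs_of_nonneg hn0.le]
        _ = |(n:ℝ) * ((1 / (n : ℝ)) * ∑ i, X i ω - v)| := (abs_mul _ _).symm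
        _ = |∑ i, X i ω - (n:ℝ)*v| := by
            congr 1
            field_simp
    rcases abs_cases (∑ i, X i ω - (n:ℝ)*v) with ⟨heq, _⟩ | ⟨heq, _⟩
    · left; rw [heq] at h2; linarith
    · right; rw [heq] at h2; linarith
  -- upper tail
  have hup : P {ω | (n:ℝ)*v + a ≤ (∑ i, X i) ω} ≤ ENNReal.ofReal (Real.exp (-(3*γ)/8)) := by
    obtain ⟨s, hs0, hsA⟩ := keyA ((n:ℝ)*v) γ (by positivity) hγ
    have hch := measure_ge_le_exp_mul_mgf (μ := P) (X := ∑ i, X i) ((n:ℝ)*v + a) hs0 (hSint s)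
    have hle : (P {ω | (n:ℝ)*v + a ≤ (∑ i, X i) ω}).toReal ≤ Real.exp (-(3*γ)/8) := by
      refine hch.trans ?_
      calc Real.exp (-s*((n:ℝ)*v+a)) * mgf (∑ i, X i) P s
          ≤ Real.exp (-s*((n:ℝ)*v+a)) * Real.exp (((n:ℝ)*v) * (Real.exp s - 1)) :=
            mul_le_mul_of_nonneg_left (hmgfS s) (Real.exp_pos _).le
        _ = Real.exp (((n:ℝ)*v) * (Real.exp s - 1) - s*((n:ℝ)*v+a)) := by
            rw [← Real.exp_add]; ring_nf
        _ ≤ Real.exp (-(3*γ)/8) := Real.exp_le_exp.2 (by rw [hadef]; exact hsA)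
    rw [← ENNReal.ofReal_toReal (measure_ne_top P _)]
    exact ENNReal.ofReal_le_ofReal hle
  -- lower tail
  have hlow : P {ω | (∑ i, X i) ω ≤ (n:ℝ)*v - a} ≤ ENNReal.ofReal (Real.exp (-(3*γ)/8)) := by
    by_cases hc : Real.sqrt (γ * ((n:ℝ)*v)) + γ ≤ (n:ℝ)*v
    · obtain ⟨s, hs0, hsB⟩ := keyB ((n:ℝ)*v) γ hγ hc
      have hch := measure_le_le_exp_mul_mgf (μ := P) (X := ∑ i, X i) ((n:ℝ)*v - a)
        (neg_nonpos.2 hs0) (hSint (-s))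
      have hle : (P {ω | (∑ i, X i) ω ≤ (n:ℝ)*v - a}).toReal ≤ Real.exp (-(3*γ)/8) := by
        refine hch.trans ?_
        calc Real.exp (-(-s)*((n:ℝ)*v-a)) * mgf (∑ i, X i) P (-s)
            ≤ Real.exp (s*((n:ℝ)*v-a)) * Real.exp (((n:ℝ)*v) * (Real.exp (-s) - 1)) := by
              rw [neg_neg]
              exact mul_le_mul_of_nonneg_left (hmgfS (-s)) (Real.exp_pos _).le
          _ = Real.exp (((n:ℝ)*v) * (Real.exp (-s) - 1) + s*((n:ℝ)*v-a)) := by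
              rw [← Real.exp_add]; ring_nf
          _ ≤ Real.exp (-(3*γ)/8) := Real.exp_le_exp.2 (by rw [hadef]; exact hsB)
      rw [← ENNReal.ofReal_toReal (measure_ne_top P _)]
      exact ENNReal.ofReal_le_ofReal hle
    · have hneg : (n:ℝ)*v - a < 0 := by
        push_neg at hc
        rw [hadef]; linarith
      have hzero : P {ω | (∑ i, X i) ω ≤ (n:ℝ)*v - a} = 0 := by
        rw [measure_eq_zero_iff_ae_notMem]
        have hae : ∀ᵐ ω ∂P, ∀ i, X i ω ∈ Set.Icc (0:ℝ) 1 := (ae_all_iff).2 hrange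
        filter_upwards [hae] with ω h0
        simp only [Set.mem_setOf_eq, Finset.sum_apply, not_le]
        calc (n:ℝ)*v - a < 0 := hneg
          _ ≤ ∑ i, X i ω := Finset.sum_nonneg fun i _ => (h0 i).1
      rw [hzero]
      exact zero_le
  calc P {ω | Real.sqrt (γ * v / n) + γ / n ≤ |(1 / (n : ℝ)) * ∑ i, X i ω - v|}
      ≤ P ({ω | (n:ℝ)*v + a ≤ (∑ i, X i) ω} ∪ {ω | (∑ i, X i) ω ≤ (n:ℝ)*v - a}) :=
        measure_mono hsub
    _ ≤ P {ω | (n:ℝ)*v + a ≤ (∑ i, X i) ω} + P {ω | (∑ i, X i) ω ≤ (n:ℝ)*v - a} :=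
        measure_union_le _ _
    _ ≤ ENNReal.ofReal (Real.exp (-(3*γ)/8)) + ENNReal.ofReal (Real.exp (-(3*γ)/8)) :=
        add_le_add hup hlow
    _ = ENNReal.ofReal (2 * Real.exp (-(3 * γ) / 8)) := by
        rw [← ENNReal.ofReal_add (Real.exp_pos _).le (Real.exp_pos _).le]
        ring_nf
end

section
/- Let γ > 0, n > 0 be real numbers and let v ≥ 0, x̄ ≥ 0 be real numbers. If |v − x̄| ≤ f_rad(v, n), then f_rad(x̄, n) ≤ 3 · f_rad(v, n). -/
theorem stmt_2 (γ n v xbar : ℝ) (hγ : 0 < γ) (hn : 0 < n)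
    (hv : 0 ≤ v) (hx : 0 ≤ xbar)
    (h : |v - xbar| ≤ frad γ v n) :
    frad γ xbar n ≤ 3 * frad γ v n := by
  set s := Real.sqrt (γ * v / n) with hs
  set c := γ / n with hc
  have hs0 : 0 ≤ s := Real.sqrt_nonneg _
  have hc0 : 0 ≤ c := by positivity
  have hxb : xbar ≤ v + s + c := by
    have := abs_le.mp h
    simp only [frad] at this
    linarith [this.1]
  have hsq : s ^ 2 = γ * v / n := Real.sq_sqrt (by positivity)
  have key : γ * xbar / n ≤ (s + c) ^ 2 := by
    have h1 : γ * xbar / n ≤ γ * (v + s + c) / n := by gcongr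
    have h2 : γ * (v + s + c) / n = s ^ 2 + c * s + c ^ 2 := by
      rw [hsq, hc]
      field_simp
    nlinarith [h1, h2, hs0, hc0]
  have hsqrt : Real.sqrt (γ * xbar / n) ≤ s + c := by
    calc Real.sqrt (γ * xbar / n) ≤ Real.sqrt ((s + c) ^ 2) := Real.sqrt_le_sqrt key
    _ = s + c := by rw [Real.sqrt_sq (by linarith)]
  simp only [frad]
  linarith
end

section
/- Let γ ≥ 1 and n > 0 be real numbers, let μ ∈ [0,1], let x̄ ≥ 0, and set μ̂ = n · x̄ / (n+1). If |x̄ − μ| ≤ f_rad(x̄, n), then |μ̂ − μ| ≤ 2 · f_rad(μ̂, n+1). -/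
theorem stmt_4 (γ n μ xbar : ℝ) (hγ : 1 ≤ γ) (hn : 0 < n)
    (hμ : μ ∈ Set.Icc (0 : ℝ) 1) (hx : 0 ≤ xbar)
    (h : |xbar - μ| ≤ frad γ xbar n) :
    |n * xbar / (n + 1) - μ| ≤ 2 * frad γ (n * xbar / (n + 1)) (n + 1) := by
  obtain ⟨hμ0, hμ1⟩ := hμ
  have hγ0 : (0:ℝ) < γ := by linarith
  have hn1 : (0:ℝ) < n + 1 := by linarith
  set m : ℝ := n * xbar / (n + 1) with hmdef
  have hm0 : 0 ≤ m := by positivity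
  set S : ℝ := Real.sqrt (γ * m / (n + 1)) with hSdef
  have hS0 : 0 ≤ S := Real.sqrt_nonneg _
  set c : ℝ := γ / (n + 1) with hcdef
  have hc0 : 0 < c := by positivity
  have hxm : n * xbar = (n + 1) * m := by
    rw [hmdef]; field_simp
  have harg : γ * xbar / n = ((n+1)/n)^2 * (γ * m / (n + 1)) := by
    rw [hmdef]; field_simp
  have hsqrt : Real.sqrt (γ * xbar / n) = ((n+1)/n) * S := by
    rw [harg, Real.sqrt_mul (sq_nonneg _), hSdef, Real.sqrt_sq (by positivity)]
  have hgn : γ / n = ((n+1)/n) * c := by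
    rw [hcdef]; field_simp
  unfold frad at h ⊢
  rw [hsqrt, hgn] at h
  have h' : |xbar - μ| ≤ ((n+1)/n) * (S + c) := by linarith [mul_add ((n+1)/n) S c]
  have hA : n * (xbar - μ) ≤ (n+1) * (S + c) := by
    have h1 : n * (xbar - μ) ≤ n * |xbar - μ| :=
      mul_le_mul_of_nonneg_left (le_abs_self _) hn.le
    have h2 : n * |xbar - μ| ≤ n * (((n+1)/n) * (S + c)) :=
      mul_le_mul_of_nonneg_left h' hn.le
    have h3 : n * (((n+1)/n) * (S + c)) = (n+1) * (S + c) := by field_simp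
    linarith
  have hB : n * (μ - xbar) ≤ (n+1) * (S + c) := by
    have h1 : n * (μ - xbar) ≤ n * |xbar - μ| := by
      have := neg_abs_le (xbar - μ)
      nlinarith
    have h2 : n * |xbar - μ| ≤ n * (((n+1)/n) * (S + c)) :=
      mul_le_mul_of_nonneg_left h' hn.le
    have h3 : n * (((n+1)/n) * (S + c)) = (n+1) * (S + c) := by field_simp
    linarith
  rw [abs_sub_le_iff]
  constructor
  · -- m - μ ≤ 2 * (S + c)
    rcases le_or_gt (S + c) m with hcase | hcase
    · nlinarith [mul_nonneg hn.le hS0, mul_nonneg hn.le hc0.le]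
    · linarith
  · -- μ - m ≤ 2 * (S + c)
    rcases le_or_gt m ((n-1) * (S + c)) with hcase | hcase
    · nlinarith [mul_nonneg hn.le hS0, mul_nonneg hn.le hc0.le]
    · have hγc : (n+1) * c = γ := by rw [hcdef]; field_simp
      have h1 : 1 ≤ (n+1) * (S + c) := by nlinarith [mul_nonneg hn1.le hS0]
      nlinarith
end

section
/- Let S be a finite type, α : S → ℝ, b ∈ ℝ, M ∈ ℕ, and let μ, u, ρ, c, l : S → ℝ satisfy μ m ≤ u m ≤ μ m + ρ m and l m ≤ c m for all m ∈ S. Let F(h, b) denote the feasible set with cost vector h and budget b. Suppose d_opt ∈ F(c, b) satisfies ∑_{m∈S} μ m · d_opt m ≥ ∑_{m∈S} μ m · p m for all p ∈ F(c, b) (so V* := ∑ μ m · d_opt m is the optimal value over F(c, b)), and suppose d* ∈ F(l, b) satisfies ∑_{m∈S} u m · d* m ≥ ∑_{m∈S} u m · p m for all p ∈ F(l, b). Then ∑_{m∈S} μ m · d* m ≥ V* − ∑_{m∈S} ρ m · d* m. -/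
open Finset

variable {S : Type*} [Fintype S]

/-- Feasible set `F(h, b)` with cost vector `h` and budget `b`. -/
def Feas (α : S → ℝ) (M : ℕ) (h : S → ℝ) (b : ℝ) : Set (S → ℝ) :=
  {p | (∀ m, 0 ≤ p m ∧ p m ≤ α m) ∧ (∑ m, p m) = 1 ∧
    (∑ m, h m * p m) ≤ b ∧ {m | p m ≠ 0}.ncard ≤ M}

theorem stmt_8 (α : S → ℝ) (b : ℝ) (M : ℕ) (μ u ρ c l : S → ℝ)
    (hu : ∀ m, μ m ≤ u m ∧ u m ≤ μ m + ρ m)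
    (hl : ∀ m, l m ≤ c m)
    (dopt : S → ℝ) (hdopt : dopt ∈ Feas α M c b)
    (hdopt_max : ∀ p ∈ Feas α M c b, ∑ m, μ m * p m ≤ ∑ m, μ m * dopt m)
    (dstar : S → ℝ) (hdstar : dstar ∈ Feas α M l b)
    (hdstar_max : ∀ p ∈ Feas α M l b, ∑ m, u m * p m ≤ ∑ m, u m * dstar m) :
    (∑ m, μ m * dopt m) - ∑ m, ρ m * dstar m ≤ ∑ m, μ m * dstar m := by
  obtain ⟨h1, h2, h3, h4⟩ := hdopt
  have hmem : dopt ∈ Feas α M l b := by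
    refine ⟨h1, h2, ?_, h4⟩
    calc ∑ m, l m * dopt m ≤ ∑ m, c m * dopt m :=
          Finset.sum_le_sum fun m _ => mul_le_mul_of_nonneg_right (hl m) (h1 m).1
      _ ≤ b := h3
  have step1 : ∑ m, μ m * dopt m ≤ ∑ m, u m * dopt m :=
    Finset.sum_le_sum fun m _ => mul_le_mul_of_nonneg_right (hu m).1 (h1 m).1
  have step2 := hdstar_max dopt hmem
  have step3 : ∑ m, u m * dstar m ≤ ∑ m, (μ m + ρ m) * dstar m :=
    Finset.sum_le_sum fun m _ => mul_le_mul_of_nonneg_right (hu m).2 (hdstar.1 m).1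
  have : ∑ m, (μ m + ρ m) * dstar m = (∑ m, μ m * dstar m) + ∑ m, ρ m * dstar m := by
    rw [← Finset.sum_add_distrib]; congr 1; ext m; ring
  linarith
end

section
/- Let S be a finite type, α : S → ℝ, b ∈ ℝ, M ∈ ℕ, and let μ, u, ρ, c, l, σ : S → ℝ satisfy ρ m ≥ 0, σ m ≥ 0, μ m ≤ u m ≤ μ m + ρ m, and c m − σ m ≤ l m ≤ c m for all m ∈ S. Let F(h, b') denote the feasible set with cost vector h and budget b'. Suppose d_opt ∈ F(c, b) attains the maximum V* of ∑ μ m · p m over F(c, b), and d* ∈ F(l, b) attains the maximum of ∑ u m · p m over F(l, b). Let D = {m : d* m ≠ 0} be the support of d*, and for b' ∈ ℝ define V_D(b') = sup { ∑ μ m · p m | p ∈ F(c, b') and {m : p m ≠ 0} ⊆ D }. Assume there is Λ ≥ 0 such that for all δ ≥ 0, V_D(b) ≥ V_D(b + δ) − Λ · δ. Then V* − V_D(b) ≤ ∑_{m∈S} (ρ m + Λ · σ m) · d* m. -/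
open Finset

variable {S : Type*} [Fintype S]

/-- Optimal performance rate restricted to distributions supported on `D`. -/
noncomputable def VD (μ α : S → ℝ) (M : ℕ) (c : S → ℝ) (D : Set S) (b' : ℝ) : ℝ :=
  sSup ((fun p : S → ℝ => ∑ m, μ m * p m) ''
    {p | p ∈ Feas α M c b' ∧ {m | p m ≠ 0} ⊆ D})

theorem stmt_9 (α : S → ℝ) (b : ℝ) (M : ℕ) (μ u ρ c l σ : S → ℝ)
    (hρ : ∀ m, 0 ≤ ρ m) (hσ : ∀ m, 0 ≤ σ m)
    (hu : ∀ m, μ m ≤ u m ∧ u m ≤ μ m + ρ m)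
    (hl : ∀ m, c m - σ m ≤ l m ∧ l m ≤ c m)
    (dopt : S → ℝ) (hdopt : dopt ∈ Feas α M c b)
    (hdopt_max : ∀ p ∈ Feas α M c b, ∑ m, μ m * p m ≤ ∑ m, μ m * dopt m)
    (dstar : S → ℝ) (hdstar : dstar ∈ Feas α M l b)
    (hdstar_max : ∀ p ∈ Feas α M l b, ∑ m, u m * p m ≤ ∑ m, u m * dstar m)
    (Λ : ℝ) (hΛ : 0 ≤ Λ)
    (hsens : ∀ δ : ℝ, 0 ≤ δ →
      VD μ α M c {m | dstar m ≠ 0} (b + δ) - Λ * δ ≤ VD μ α M c {m | dstar m ≠ 0} b) :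
    (∑ m, μ m * dopt m) - VD μ α M c {m | dstar m ≠ 0} b
      ≤ ∑ m, (ρ m + Λ * σ m) * dstar m := by
  have hd0 : ∀ m, 0 ≤ dstar m := fun m => (hdstar.1 m).1
  set δ : ℝ := ∑ m, σ m * dstar m with hδdef
  have hδ : 0 ≤ δ := Finset.sum_nonneg fun m _ => mul_nonneg (hσ m) (hd0 m)
  -- dstar feasible for true costs with budget b + δ
  have h1 : dstar ∈ Feas α M c (b + δ) := by
    obtain ⟨ha, hs, hb, hn⟩ := hdstar
    refine ⟨ha, hs, ?_, hn⟩
    have : ∑ m, c m * dstar m ≤ ∑ m, (l m + σ m) * dstar m := by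
      apply Finset.sum_le_sum
      intro m _
      exact mul_le_mul_of_nonneg_right (by linarith [(hl m).1]) (hd0 m)
    calc ∑ m, c m * dstar m ≤ ∑ m, (l m + σ m) * dstar m := this
      _ = (∑ m, l m * dstar m) + δ := by
          rw [hδdef, ← Finset.sum_add_distrib]; congr 1; ext m; ring
      _ ≤ b + δ := by linarith
  -- bounded above
  have hbdd : BddAbove ((fun p : S → ℝ => ∑ m, μ m * p m) ''
      {p | p ∈ Feas α M c (b + δ) ∧ {m | p m ≠ 0} ⊆ {m | dstar m ≠ 0}}) := by
    refine ⟨∑ m, |μ m| * α m, ?_⟩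
    rintro x ⟨p, ⟨⟨ha, _, _, _⟩, _⟩, rfl⟩
    apply Finset.sum_le_sum
    intro m _
    calc μ m * p m ≤ |μ m| * p m :=
          mul_le_mul_of_nonneg_right (le_abs_self _) (ha m).1
      _ ≤ |μ m| * α m := mul_le_mul_of_nonneg_left (ha m).2 (abs_nonneg _)
  have h2 : ∑ m, μ m * dstar m ≤ VD μ α M c {m | dstar m ≠ 0} (b + δ) :=
    le_csSup hbdd ⟨dstar, ⟨h1, fun m hm => hm⟩, rfl⟩
  -- dopt feasible for optimistic costs
  have h3 : dopt ∈ Feas α M l b := by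
    obtain ⟨ha, hs, hb, hn⟩ := hdopt
    refine ⟨ha, hs, ?_, hn⟩
    calc ∑ m, l m * dopt m ≤ ∑ m, c m * dopt m := by
          apply Finset.sum_le_sum
          intro m _
          exact mul_le_mul_of_nonneg_right (hl m).2 (ha m).1
      _ ≤ b := hb
  have h4 : ∑ m, μ m * dopt m ≤ ∑ m, u m * dopt m := by
    apply Finset.sum_le_sum
    intro m _
    exact mul_le_mul_of_nonneg_right (hu m).1 (hdopt.1 m).1
  have h5 : ∑ m, u m * dopt m ≤ ∑ m, u m * dstar m := hdstar_max dopt h3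
  have h6 : ∑ m, u m * dstar m ≤ (∑ m, μ m * dstar m) + ∑ m, ρ m * dstar m := by
    rw [← Finset.sum_add_distrib]
    apply Finset.sum_le_sum
    intro m _
    have := mul_le_mul_of_nonneg_right (hu m).2 (hd0 m)
    nlinarith
  have h7 := hsens δ hδ
  have h8 : ∑ m, (ρ m + Λ * σ m) * dstar m
      = (∑ m, ρ m * dstar m) + Λ * δ := by
    rw [hδdef, Finset.mul_sum, ← Finset.sum_add_distrib]
    congr 1; ext m; ring
  linarith
end
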